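/- arXiv:1708.00245 — 4 statements merged into one kernel-verified Lean document; each statement's English description precedes it below -/
import Mathlib

section
/- Let P(x,y) = -((1+x^2)y + x^3)^5 and Q(x,y) = y^2(y^2+x^3). For every point (x,y) with y ≥ 1 and y^2 + x^3 > 0, one has -1 ≤ Q(x,y)/P(x,y) ≤ 0 (equivalently, 0 ≤ Q(x,y) ≤ -P(x,y)). -/
/-- For `P(x,y) = -((1+x^2)y + x^3)^5` and `Q(x,y) = y^2(y^2+x^3)`, on the region
`y ≥ 1`, `y^2 + x^3 > 0` we have `-1 ≤ Q/P ≤ 0`, equivalently `0 ≤ Q ≤ -P`. -/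
theorem stmt_1 (x y : ℝ) (hy : 1 ≤ y) (hpos : 0 < y ^ 2 + x ^ 3) :
    0 ≤ y ^ 2 * (y ^ 2 + x ^ 3) ∧
      y ^ 2 * (y ^ 2 + x ^ 3) ≤ -(-(((1 + x ^ 2) * y + x ^ 3) ^ 5)) ∧
      -1 ≤ y ^ 2 * (y ^ 2 + x ^ 3) / (-(((1 + x ^ 2) * y + x ^ 3) ^ 5)) ∧
      y ^ 2 * (y ^ 2 + x ^ 3) / (-(((1 + x ^ 2) * y + x ^ 3) ^ 5)) ≤ 0 := by
  have hyx : 0 ≤ y + x := by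
    by_contra h
    push_neg at h
    nlinarith [sq_nonneg (x + y), sq_nonneg (x - y)]
  have hA : 1 ≤ (1 + x ^ 2) * y + x ^ 3 := by
    nlinarith [mul_nonneg (sq_nonneg x) hyx]
  have hQ : 0 ≤ y ^ 2 * (y ^ 2 + x ^ 3) := by positivity
  have hAy : y ≤ (1 + x ^ 2) * y + x ^ 3 := by
    nlinarith [mul_nonneg (sq_nonneg x) hyx]
  have hle : y ^ 2 * (y ^ 2 + x ^ 3) ≤ ((1 + x ^ 2) * y + x ^ 3) ^ 5 := by
    have h45 : ((1 + x ^ 2) * y + x ^ 3) ^ 4 ≤ ((1 + x ^ 2) * y + x ^ 3) ^ 5 :=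
      pow_le_pow_right₀ hA (by norm_num)
    rcases le_or_gt x 0 with h | h
    · have hx3 : x ^ 3 ≤ 0 := by nlinarith [sq_nonneg x]
      have h1 : y ^ 2 * (y ^ 2 + x ^ 3) ≤ y ^ 4 := by nlinarith
      have h2 : y ^ 4 ≤ ((1 + x ^ 2) * y + x ^ 3) ^ 4 :=
        pow_le_pow_left₀ (by linarith) hAy 4
      linarith
    · have hx3 : 0 ≤ x ^ 3 := by positivity
      have hAy' : y + x ^ 3 ≤ (1 + x ^ 2) * y + x ^ 3 := by
        nlinarith [sq_nonneg x]
      have h4 : y ^ 4 + y ^ 2 * x ^ 3 ≤ (y + x ^ 3) ^ 4 := by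
        nlinarith [mul_nonneg (mul_nonneg (sq_nonneg y) hx3) (by linarith : (0:ℝ) ≤ 4*y - 1),
          mul_nonneg (sq_nonneg y) (sq_nonneg (x^3)),
          mul_nonneg (mul_nonneg (by linarith : (0:ℝ) ≤ y) hx3) (sq_nonneg (x^3)),
          sq_nonneg ((x^3)^2)]
      have h5 : (y + x ^ 3) ^ 4 ≤ ((1 + x ^ 2) * y + x ^ 3) ^ 4 :=
        pow_le_pow_left₀ (by positivity) hAy' 4
      linarith
  have hApos : 0 < ((1 + x ^ 2) * y + x ^ 3) ^ 5 := by positivity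
  refine ⟨hQ, by linarith, ?_, ?_⟩
  · rw [le_div_iff_of_neg (by linarith : -(((1 + x ^ 2) * y + x ^ 3) ^ 5) < 0)]
    linarith
  · exact div_nonpos_of_nonneg_of_nonpos hQ (by linarith)
end

section
/- For all real x ≤ 0 and y ≥ 1 with y ≥ -x and y^2 + x^3 > 0, one has y^2(y^2 + x^3) ≤ (y + y x^2 + x^3)^5. -/
/-- For all real `x ≤ 0`, `y ≥ 1` with `y ≥ -x` and `y^2 + x^3 > 0`, one has
`y^2(y^2+x^3) ≤ (y + y x^2 + x^3)^5`. -/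
theorem stmt_3 (x y : ℝ) (hx : x ≤ 0) (hy : 1 ≤ y) (hxy : -x ≤ y)
    (hpos : 0 < y ^ 2 + x ^ 3) :
    y ^ 2 * (y ^ 2 + x ^ 3) ≤ (y + y * x ^ 2 + x ^ 3) ^ 5 := by
  have hy0 : (0:ℝ) ≤ y := by linarith
  have hx3 : x ^ 3 ≤ 0 := by nlinarith [sq_nonneg x]
  have h1 : y ^ 2 * (y ^ 2 + x ^ 3) ≤ y ^ 4 := by nlinarith
  have h2 : y ^ 4 ≤ y ^ 5 := by nlinarith [pow_le_pow_right₀ hy (by norm_num : 4 ≤ 5)]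
  have hyx : (0:ℝ) ≤ y * x ^ 2 + x ^ 3 := by nlinarith [sq_nonneg x]
  have h3 : y ^ 5 ≤ (y + y * x ^ 2 + x ^ 3) ^ 5 := by
    apply pow_le_pow_left₀ hy0; linarith
  linarith
end

section
/- For all real x with -1/8 ≤ x ≤ 0 and all real y with y ≥ -2x, one has y + x^3/(1+x^2) ≤ 2(y - (-x)^{3/2}). -/
/-- For `-1/8 ≤ x ≤ 0` and `y ≥ -2x`:
`y + x^3/(1+x^2) ≤ 2(y - (-x)^{3/2})`. -/
theorem stmt_5 (x y : ℝ) (hx1 : -(1/8 : ℝ) ≤ x) (hx2 : x ≤ 0) (hy : -2 * x ≤ y) :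
    y + x ^ 3 / (1 + x ^ 2) ≤ 2 * (y - (-x) ^ ((3 : ℝ) / 2)) := by
  have ht0 : (0:ℝ) ≤ -x := by linarith
  have hpos : (0:ℝ) < 1 + x ^ 2 := by positivity
  set s := Real.sqrt (-x) with hsdef
  have hs0 : 0 ≤ s := Real.sqrt_nonneg _
  have hs2 : s ^ 2 = -x := Real.sq_sqrt ht0
  have hrw : (-x) ^ ((3:ℝ)/2) = s ^ 3 := by
    rw [show (3:ℝ)/2 = (1/2)*3 by ring, Real.rpow_mul ht0, ← Real.sqrt_eq_rpow,
      show ((3:ℝ) = ((3:ℕ):ℝ)) by norm_num, Real.rpow_natCast]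
  have hs1 : s ≤ 1 := by nlinarith
  have hcube : s ^ 3 ≤ s ^ 2 := by nlinarith
  have hdiv : x ^ 3 / (1 + x ^ 2) ≤ 0 :=
    div_nonpos_of_nonpos_of_nonneg (by nlinarith) (le_of_lt hpos)
  rw [hrw]
  nlinarith
end

section
/- Let Φ be a flow on ℝ² for which the origin is a global attractor. Then the union of all homoclinic orbits of Φ is a bounded subset of ℝ². -/
/-- A (continuous) flow on the plane. -/
def IsFlow (Φ : ℝ → ℝ × ℝ → ℝ × ℝ) : Prop :=
  Continuous (fun p : ℝ × (ℝ × ℝ) => Φ p.1 p.2) ∧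
  (∀ z, Φ 0 z = z) ∧ (∀ s t z, Φ (s + t) z = Φ s (Φ t z))

/-- The orbit of a point. -/
def orb (Φ : ℝ → ℝ × ℝ → ℝ × ℝ) (z : ℝ × ℝ) : Set (ℝ × ℝ) :=
  Set.range fun t => Φ t z

/-- The ω-limit set of a point. -/
def omegaLim (Φ : ℝ → ℝ × ℝ → ℝ × ℝ) (z : ℝ × ℝ) : Set (ℝ × ℝ) :=
  {u | ∃ t : ℕ → ℝ, Filter.Tendsto t Filter.atTop Filter.atTop ∧
    Filter.Tendsto (fun n => Φ (t n) z) Filter.atTop (nhds u)}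

/-- The α-limit set of a point. -/
def alphaLim (Φ : ℝ → ℝ × ℝ → ℝ × ℝ) (z : ℝ × ℝ) : Set (ℝ × ℝ) :=
  {u | ∃ t : ℕ → ℝ, Filter.Tendsto t Filter.atTop Filter.atBot ∧
    Filter.Tendsto (fun n => Φ (t n) z) Filter.atTop (nhds u)}

/-- The origin is a global attractor: every ω-limit set is `{0}`. -/
def GlobalAttractor (Φ : ℝ → ℝ × ℝ → ℝ × ℝ) : Prop :=
  ∀ z, omegaLim Φ z = {0}

/-- A point (and its orbit) is homoclinic: ω-limit and α-limit both `{0}`. -/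
def Homoclinic (Φ : ℝ → ℝ × ℝ → ℝ × ℝ) (z : ℝ × ℝ) : Prop :=
  omegaLim Φ z = {0} ∧ alphaLim Φ z = {0}

/-- `enclosed Γ` : the orbit `Γ`, the origin, and all bounded complementary
components of `Γ ∪ {0}`; for a regular homoclinic orbit this is the closed disk
`E(Γ)` bounded by the Jordan curve `Γ ∪ {0}`. -/
def enclosed (Γ : Set (ℝ × ℝ)) : Set (ℝ × ℝ) :=
  (Γ ∪ {0}) ∪ {p | Bornology.IsBounded (connectedComponentIn (Γ ∪ {0})ᶜ p)}

/-- The union of all homoclinic orbits of a plane flow with the origin as a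
global attractor is bounded. -/
theorem stmt_11 (Φ : ℝ → ℝ × ℝ → ℝ × ℝ) (hΦ : IsFlow Φ)
    (hattr : GlobalAttractor Φ) :
    Bornology.IsBounded (⋃ z ∈ {z | Homoclinic Φ z}, orb Φ z) := by
  obtain ⟨hcont, hzero, hadd⟩ := hΦ
  set S := Metric.sphere (0 : ℝ × ℝ) 1 with hSdef
  -- choice of entry times into the unit ball
  have h1 : ∀ a : ℝ × ℝ, ∃ τ : ℝ, 0 ≤ τ ∧ (a ∈ S → ‖Φ τ a‖ < 1) := by
    intro a
    by_cases ha : a ∈ S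
    · have h0 : (0 : ℝ × ℝ) ∈ omegaLim Φ a := by rw [hattr a]; rfl
      obtain ⟨t, htt, htl⟩ := h0
      have h2 : ∀ᶠ n in Filter.atTop, Φ (t n) a ∈ Metric.ball (0 : ℝ × ℝ) 1 :=
        htl (Metric.ball_mem_nhds _ one_pos)
      have h3 : ∀ᶠ n in Filter.atTop, 0 ≤ t n := htt.eventually_ge_atTop 0
      obtain ⟨n, hn1, hn2⟩ := (h2.and h3).exists
      exact ⟨t n, hn2, fun _ => mem_ball_zero_iff.mp hn1⟩
    · exact ⟨0, le_refl _, fun h => absurd h ha⟩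
  choose τ hτ0 hτ1 using h1
  have hU : ∀ b : ℝ × ℝ, IsOpen {x : ℝ × ℝ | ‖Φ (τ b) x‖ < 1} := by
    intro b
    have hc : Continuous fun x : ℝ × ℝ => ‖Φ (τ b) x‖ :=
      (hcont.comp (continuous_const.prodMk continuous_id)).norm
    exact isOpen_lt hc continuous_const
  obtain ⟨F, hF⟩ := (isCompact_sphere (0 : ℝ × ℝ) 1).elim_finite_subcover
    (fun b : ℝ × ℝ => {x : ℝ × ℝ | ‖Φ (τ b) x‖ < 1}) hU
    (fun a ha => Set.mem_iUnion.mpr ⟨a, hτ1 a ha⟩)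
  obtain ⟨M, hM⟩ := (F.image τ).exists_le
  set T := max M 0 with hTdef
  have key : ∀ a ∈ S, ∃ t₀, 0 ≤ t₀ ∧ t₀ ≤ T ∧ ‖Φ t₀ a‖ < 1 := by
    intro a ha
    obtain ⟨b, hbF, hb⟩ := Set.mem_iUnion₂.mp (hF ha)
    exact ⟨τ b, hτ0 b,
      le_trans (hM _ (Finset.mem_image_of_mem τ hbF)) (le_max_left _ _), hb⟩
  have hbig : Bornology.IsBounded (Metric.closedBall (0 : ℝ × ℝ) 1 ∪
      (fun q : ℝ × (ℝ × ℝ) => Φ q.1 q.2) '' (Set.Icc 0 T ×ˢ S)) :=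
    Metric.isBounded_closedBall.union
      (((isCompact_Icc.prod (isCompact_sphere 0 1)).image hcont).isBounded)
  refine hbig.subset ?_
  intro p hp
  simp only [Set.mem_iUnion, Set.mem_setOf_eq] at hp
  obtain ⟨z, hz, hpz⟩ := hp
  obtain ⟨θ, rfl⟩ := hpz
  set p := Φ θ z with hpdef
  by_cases hnorm : ‖p‖ ≤ 1
  · exact Or.inl (mem_closedBall_zero_iff.mpr hnorm)
  push_neg at hnorm
  -- backward orbit of p reaches the unit ball
  have h0a : (0 : ℝ × ℝ) ∈ alphaLim Φ z := by rw [hz.2]; rfl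
  obtain ⟨t, htB, htl⟩ := h0a
  have h2 : ∀ᶠ n in Filter.atTop, Φ (t n) z ∈ Metric.ball (0 : ℝ × ℝ) 1 :=
    htl (Metric.ball_mem_nhds _ one_pos)
  have h3 : ∀ᶠ n in Filter.atTop, t n ≤ θ - 1 := htB.eventually_le_atBot (θ - 1)
  obtain ⟨n, hn1, hn2⟩ := (h2.and h3).exists
  set s := t n - θ with hsdef
  have hsneg : s < 0 := by simp [hsdef]; linarith
  have hsp : Φ s p = Φ (t n) z := by
    rw [hpdef, ← hadd]
    congr 1
    ring
  set g : ℝ → ℝ := fun u => ‖Φ u p‖ with hgdef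
  have hg : Continuous g :=
    (hcont.comp (continuous_id.prodMk continuous_const)).norm
  set E := Set.Icc s 0 ∩ {u | g u ≤ 1} with hEdef
  have hsE : s ∈ E := by
    refine ⟨⟨le_refl _, le_of_lt hsneg⟩, ?_⟩
    simp only [Set.mem_setOf_eq, hgdef, hsp]
    exact le_of_lt (mem_ball_zero_iff.mp hn1)
  have hEcomp : IsCompact E :=
    isCompact_Icc.inter_right (isClosed_le hg continuous_const)
  set r := sSup E with hrdef
  have hrE : r ∈ E := hEcomp.sSup_mem ⟨s, hsE⟩
  have hub : ∀ u ∈ E, u ≤ r := fun u hu =>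
    le_csSup ⟨0, fun v hv => hv.1.2⟩ hu
  have hr0 : r ≤ 0 := hrE.1.2
  have hgr : g r ≤ 1 := hrE.2
  have hg0 : g 0 = ‖p‖ := by simp [hgdef, hzero]
  have hrneg : r < 0 := by
    rcases lt_or_eq_of_le hr0 with h | h
    · exact h
    · exfalso; rw [h, hg0] at hgr; linarith
  have hgt : ∀ u, r < u → u ≤ 0 → 1 < g u := by
    intro u hu1 hu2
    by_contra hle
    push_neg at hle
    have : u ∈ E := ⟨⟨le_trans hrE.1.1 (le_of_lt hu1), hu2⟩, hle⟩
    exact absurd (hub u this) (not_le.mpr hu1)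
  have hgr1 : g r = 1 := by
    rcases lt_or_eq_of_le hgr with hlt | h
    · exfalso
      have e1 : ∀ᶠ u in nhdsWithin r (Set.Ioi r), g u < 1 :=
        ((hg.continuousAt (x := r)).eventually_lt continuousAt_const hlt).filter_mono
          nhdsWithin_le_nhds
      have e2 : ∀ᶠ u in nhdsWithin r (Set.Ioi r), u < 0 :=
        Filter.Eventually.filter_mono nhdsWithin_le_nhds (Iio_mem_nhds hrneg)
      have e3 : ∀ᶠ u in nhdsWithin r (Set.Ioi r), u ∈ Set.Ioi r :=
        eventually_mem_nhdsWithin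
      obtain ⟨u, ⟨hu1, hu2⟩, hu3⟩ := ((e1.and e2).and e3).exists
      exact absurd hu1 (not_lt.mpr (le_of_lt (hgt u hu3 (le_of_lt hu2))))
    · exact h
  set a := Φ r p with hadef
  have haS : a ∈ S := by
    rw [hSdef, mem_sphere_zero_iff_norm]
    exact hgr1
  have hpa : Φ (-r) a = p := by
    rw [hadef, ← hadd]
    simp [hzero]
  obtain ⟨t₀, ht₀0, ht₀T, ht₀lt⟩ := key a haS
  have haeq : ∀ σ : ℝ, Φ σ a = Φ (σ + r) p := by
    intro σ; rw [hadef, ← hadd]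
  have hlt : -r < t₀ := by
    by_contra hle
    push_neg at hle
    have h1r : 1 ≤ g (t₀ + r) := by
      rcases lt_or_eq_of_le (by linarith : r ≤ t₀ + r) with h | h
      · exact le_of_lt (hgt _ h (by linarith))
      · rw [← h, hgr1]
    rw [haeq t₀] at ht₀lt
    change g (t₀ + r) < 1 at ht₀lt
    linarith
  right
  refine ⟨(-r, a), ⟨⟨?_, ?_⟩, haS⟩, hpa⟩
  · exact neg_nonneg.mpr hr0
  · show -r ≤ T
    linarith
end
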